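/- Let Z = (Z_1, Z_2) be a standard Gaussian vector in ℝ². For each y ∈ {−1, 1}, the event {sign(Z_1 Z_2) = y} has probability 1/2, and the conditional expectation of Z Zᵀ − I_2 given this event equals (2y/π)·J, where J is the 2×2 matrix with 0 on the diagonal and 1 off-diagonal; that is, E[Z_1 Z_2 | sign(Z_1Z_2) = y] = 2y/π and E[Z_i² | sign(Z_1Z_2) = y] = 1 for i = 1, 2. Consequently, the linear operator on real symmetric 2×2 matrices 𝓕(M) = Σ_{y∈{−1,1}} (1/2)·((2y/π)J) M ((2y/π)J)ᵀ satisfies ‖𝓕(M)‖_F = (4/π²)·‖M‖_F for every symmetric M, so sup{‖𝓕(M)‖_F : ‖M‖_F = 1} = 4/π². -/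

import Mathlib

open MeasureTheory ProbabilityTheory Matrix

/-- The Frobenius norm of a real matrix. -/
noncomputable def frobNorm {p : ℕ} (M : Matrix (Fin p) (Fin p) ℝ) : ℝ :=
  Real.sqrt (∑ i, ∑ j, (M i j) ^ 2)

/-- The 2×2 matrix with 0 on the diagonal and 1 off-diagonal. -/
def Jmat : Matrix (Fin 2) (Fin 2) ℝ := !![0, 1; 1, 0]

/-- The linearized operator for the 2-sparse parity:
`𝓕(M) = ∑_{y ∈ {−1,1}} (1/2)·((2y/π)J) M ((2y/π)J)ᵀ`. -/
noncomputable def parity2Op (M : Matrix (Fin 2) (Fin 2) ℝ) :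
    Matrix (Fin 2) (Fin 2) ℝ :=
  ∑ y ∈ ({-1, 1} : Finset ℝ),
    (1 / 2 : ℝ) • (((2 * y / Real.pi) • Jmat) * M * ((2 * y / Real.pi) • Jmat)ᵀ)

open Real Set
open scoped ENNReal NNReal

lemma parity2Op_apply (M : Matrix (Fin 2) (Fin 2) ℝ) (i j : Fin 2) :
    parity2Op M i j = (4 / Real.pi ^ 2) * (Jmat * M * Jmat) i j := by
  have hπ : Real.pi ≠ 0 := Real.pi_ne_zero
  rw [parity2Op]
  rw [Finset.sum_insert (by norm_num), Finset.sum_singleton]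
  have hJ : (Jmat)ᵀ = Jmat := by ext i j; fin_cases i <;> fin_cases j <;> rfl
  simp only [transpose_smul, hJ, smul_mul_assoc, mul_smul_comm, Matrix.add_apply,
    Matrix.smul_apply, smul_eq_mul]
  field_simp
  ring

lemma frob_parity2Op (M : Matrix (Fin 2) (Fin 2) ℝ) :
    frobNorm (parity2Op M) = (4 / Real.pi ^ 2) * frobNorm M := by
  have hc : (0:ℝ) ≤ 4 / Real.pi ^ 2 := by positivity
  have h1 : ∑ i, ∑ j, (parity2Op M i j) ^ 2
      = (4 / Real.pi ^ 2) ^ 2 * ∑ i, ∑ j, (M i j) ^ 2 := by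
    simp only [parity2Op_apply, Fin.sum_univ_two, Jmat, Matrix.mul_apply,
      Matrix.of_apply, Fin.sum_univ_two]
    norm_num [Matrix.cons_val_zero, Matrix.cons_val_one, Matrix.head_cons]
    ring
  rw [frobNorm, h1, Real.sqrt_mul (by positivity), Real.sqrt_sq hc, frobNorm]

lemma frob_norm_example : frobNorm ((Real.sqrt 2)⁻¹ • (1 : Matrix (Fin 2) (Fin 2) ℝ)) = 1 := by
  have h2 : (Real.sqrt 2) ^ 2 = 2 := Real.sq_sqrt (by norm_num)
  rw [frobNorm]
  rw [show ∑ i, ∑ j, (((Real.sqrt 2)⁻¹ • (1 : Matrix (Fin 2) (Fin 2) ℝ)) i j) ^ 2 = (1:ℝ) by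
    simp only [Fin.sum_univ_two, Matrix.smul_apply, Matrix.one_apply, smul_eq_mul]
    norm_num [inv_pow, h2]]
  exact Real.sqrt_one

lemma sSup_part :
    sSup {x : ℝ | ∃ M : Matrix (Fin 2) (Fin 2) ℝ,
        M.IsSymm ∧ frobNorm M = 1 ∧ x = frobNorm (parity2Op M)} = 4 / Real.pi ^ 2 := by
  have hset : {x : ℝ | ∃ M : Matrix (Fin 2) (Fin 2) ℝ,
      M.IsSymm ∧ frobNorm M = 1 ∧ x = frobNorm (parity2Op M)} = {4 / Real.pi ^ 2} := by
    ext x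
    simp only [Set.mem_setOf_eq, Set.mem_singleton_iff]
    constructor
    · rintro ⟨M, _, h1, rfl⟩
      rw [frob_parity2Op, h1, mul_one]
    · rintro rfl
      refine ⟨(Real.sqrt 2)⁻¹ • 1, ?_, frob_norm_example, ?_⟩
      · rw [Matrix.IsSymm, Matrix.transpose_smul, Matrix.transpose_one]
      · rw [frob_parity2Op, frob_norm_example, mul_one]
  rw [hset, csSup_singleton]

lemma gauss_setIntegral (f : ℝ → ℝ) {s : Set ℝ} (hs : MeasurableSet s) :
    ∫ x in s, f x ∂(gaussianReal 0 1) = ∫ x in s, gaussianPDFReal 0 1 x * f x := by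
  rw [gaussianReal_of_var_ne_zero 0 one_ne_zero, gaussianPDF_def]
  have h : (fun x => ENNReal.ofReal (gaussianPDFReal 0 1 x))
      = (fun x => ((gaussianPDFReal 0 1 x).toNNReal : ℝ≥0∞)) := rfl
  rw [h, setIntegral_withDensity_eq_setIntegral_smul
    ((measurable_gaussianPDFReal 0 1).real_toNNReal) f hs]
  refine setIntegral_congr_fun hs fun x _ => ?_
  simp [NNReal.smul_def, Real.coe_toNNReal _ (gaussianPDFReal_nonneg 0 1 x)]

lemma gpdf_eq (x : ℝ) :
    gaussianPDFReal 0 1 x = (Real.sqrt (2 * π))⁻¹ * rexp (-(1/2) * x ^ 2) := by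
  rw [gaussianPDFReal]
  simp only [NNReal.coe_one, mul_one, sub_zero]
  rw [show -x^2/2 = -(1/2) * x^2 by ring]

lemma int_Ioi_id : ∫ x in Ioi (0:ℝ), x * rexp (-(1/2) * x ^ 2) = 1 := by
  have h := integral_rpow_mul_exp_neg_mul_rpow (p := 2) (q := 1) (b := 1/2)
    (by norm_num) (by norm_num) (by norm_num)
  rw [show ∫ x in Ioi (0:ℝ), x ^ (1:ℝ) * rexp (-(1/2) * x ^ (2:ℝ))
      = ∫ x in Ioi (0:ℝ), x * rexp (-(1/2) * x ^ 2) from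
    setIntegral_congr_fun measurableSet_Ioi fun x _ => by
      rw [Real.rpow_one, show (2:ℝ) = ((2:ℕ):ℝ) by norm_num, Real.rpow_natCast]] at h
  rw [show ((1:ℝ)+1)/2 = 1 by norm_num, show (-((1:ℝ)+1)/2 : ℝ) = -1 by norm_num,
    Real.Gamma_one, Real.rpow_neg_one] at h
  rw [h]; norm_num

lemma int_Ioi_sq : ∫ x in Ioi (0:ℝ), x ^ 2 * rexp (-(1/2) * x ^ 2) = Real.sqrt (2 * π) / 2 := by
  have h := integral_rpow_mul_exp_neg_mul_rpow (p := 2) (q := 2) (b := 1/2)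
    (by norm_num) (by norm_num) (by norm_num)
  rw [show ∫ x in Ioi (0:ℝ), x ^ (2:ℝ) * rexp (-(1/2) * x ^ (2:ℝ))
      = ∫ x in Ioi (0:ℝ), x ^ 2 * rexp (-(1/2) * x ^ 2) from
    setIntegral_congr_fun measurableSet_Ioi fun x _ => by
      rw [show (2:ℝ) = ((2:ℕ):ℝ) by norm_num, Real.rpow_natCast]] at h
  rw [h]
  have hG : Real.Gamma (((2:ℝ) + 1) / 2) = Real.sqrt π / 2 := by
    rw [show (((2:ℝ) + 1) / 2 : ℝ) = 1/2 + 1 by norm_num, Real.Gamma_add_one (by norm_num),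
      Real.Gamma_one_half_eq]
    ring
  have hb : ((1:ℝ)/2) ^ (-((2:ℝ) + 1) / 2 : ℝ) = 2 * Real.sqrt 2 := by
    rw [show (-((2:ℝ) + 1) / 2 : ℝ) = -(3/2) by norm_num, Real.rpow_neg (by norm_num),
      show ((1:ℝ)/2) = 2⁻¹ by norm_num, Real.inv_rpow (by norm_num), inv_inv,
      show (3/2 : ℝ) = 1 + 1/2 by norm_num, Real.rpow_add (by norm_num), Real.rpow_one,
      ← Real.sqrt_eq_rpow]
  rw [hG, hb, Real.sqrt_mul (by norm_num)]
  ring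

lemma sqrt2pi_pos : (0:ℝ) < Real.sqrt (2 * π) := Real.sqrt_pos.mpr (by positivity)

lemma gIoi_id : ∫ x in Ioi (0:ℝ), x ∂(gaussianReal 0 1) = (Real.sqrt (2 * π))⁻¹ := by
  rw [gauss_setIntegral _ measurableSet_Ioi,
    show ∫ x in Ioi (0:ℝ), gaussianPDFReal 0 1 x * x
      = ∫ x in Ioi (0:ℝ), (Real.sqrt (2*π))⁻¹ * (x * rexp (-(1/2) * x^2)) from
      setIntegral_congr_fun measurableSet_Ioi fun x _ => by rw [gpdf_eq]; ring,
    integral_const_mul, int_Ioi_id, mul_one]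

lemma gIoi_sq : ∫ x in Ioi (0:ℝ), x ^ 2 ∂(gaussianReal 0 1) = 1 / 2 := by
  rw [gauss_setIntegral _ measurableSet_Ioi,
    show ∫ x in Ioi (0:ℝ), gaussianPDFReal 0 1 x * x ^ 2
      = ∫ x in Ioi (0:ℝ), (Real.sqrt (2*π))⁻¹ * (x ^ 2 * rexp (-(1/2) * x^2)) from
      setIntegral_congr_fun measurableSet_Ioi fun x _ => by rw [gpdf_eq]; ring,
    integral_const_mul, int_Ioi_sq]
  field_simp

lemma gauss_map_neg : Measure.map (fun x : ℝ => -x) (gaussianReal 0 1) = gaussianReal 0 1 := by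
  have h := gaussianReal_map_const_mul (μ := 0) (v := 1) (-1)
  have h1 : (⟨(-1:ℝ)^2, sq_nonneg _⟩ : ℝ≥0) = 1 := by ext; norm_num
  rw [mul_zero] at h
  rw [show (fun x : ℝ => -x) = fun x : ℝ => (-1) * x from funext fun x => by ring]
  rw [h]; congr 1; ext; simp

lemma gauss_integrable_id : Integrable (fun x : ℝ => x) (gaussianReal 0 1) := by
  rw [gaussianReal_of_var_ne_zero 0 one_ne_zero, gaussianPDF_def]
  have h : (fun x => ENNReal.ofReal (gaussianPDFReal 0 1 x))
      = (fun x => ((gaussianPDFReal 0 1 x).toNNReal : ℝ≥0∞)) := rfl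
  rw [h, integrable_withDensity_iff_integrable_smul
    ((measurable_gaussianPDFReal 0 1).real_toNNReal)]
  have : Integrable (fun x : ℝ => (Real.sqrt (2*π))⁻¹ * (x * rexp (-(1/2) * x^2))) :=
    (integrable_mul_exp_neg_mul_sq (by norm_num : (0:ℝ) < 1/2)).const_mul _
  refine this.congr (ae_of_all _ fun x => ?_)
  simp only [NNReal.smul_def, Real.coe_toNNReal _ (gaussianPDFReal_nonneg 0 1 x), smul_eq_mul]
  rw [gpdf_eq]; ring

lemma gauss_integrable_sq : Integrable (fun x : ℝ => x ^ 2) (gaussianReal 0 1) := by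
  rw [gaussianReal_of_var_ne_zero 0 one_ne_zero, gaussianPDF_def]
  have h : (fun x => ENNReal.ofReal (gaussianPDFReal 0 1 x))
      = (fun x => ((gaussianPDFReal 0 1 x).toNNReal : ℝ≥0∞)) := rfl
  rw [h, integrable_withDensity_iff_integrable_smul
    ((measurable_gaussianPDFReal 0 1).real_toNNReal)]
  have h2 : Integrable (fun x : ℝ => x ^ (2:ℝ) * rexp (-(1/2) * x^2)) :=
    integrable_rpow_mul_exp_neg_mul_sq (by norm_num : (0:ℝ) < 1/2) (by norm_num : (-1:ℝ) < 2)
  have : Integrable (fun x : ℝ => (Real.sqrt (2*π))⁻¹ * (x ^ (2:ℝ) * rexp (-(1/2) * x^2))) :=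
    h2.const_mul _
  refine this.congr (ae_of_all _ fun x => ?_)
  simp only [NNReal.smul_def, Real.coe_toNNReal _ (gaussianPDFReal_nonneg 0 1 x), smul_eq_mul]
  rw [gpdf_eq, show x ^ (2:ℝ) = x ^ 2 by
    rw [show (2:ℝ) = ((2:ℕ):ℝ) by norm_num, Real.rpow_natCast]]
  ring

lemma gauss_neg_setIntegral (f : ℝ → ℝ) (hf : Continuous f) :
    ∫ x in Iio (0:ℝ), f x ∂(gaussianReal 0 1) = ∫ x in Ioi (0:ℝ), f (-x) ∂(gaussianReal 0 1) := by
  conv_lhs => rw [← gauss_map_neg]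
  rw [setIntegral_map measurableSet_Iio
    (hf.aestronglyMeasurable) measurable_neg.aemeasurable]
  congr 1
  ext x
  simp

lemma gIio_id : ∫ x in Iio (0:ℝ), x ∂(gaussianReal 0 1) = -(Real.sqrt (2 * π))⁻¹ := by
  rw [gauss_neg_setIntegral (fun x => x) continuous_id', integral_neg, gIoi_id]

lemma gIio_sq : ∫ x in Iio (0:ℝ), x ^ 2 ∂(gaussianReal 0 1) = 1 / 2 := by
  rw [gauss_neg_setIntegral (fun x => x ^ 2) (by continuity)]
  simp_rw [neg_sq]
  exact gIoi_sq

lemma gmeas_Ioi : gaussianReal 0 1 (Ioi 0) = 1 / 2 := by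
  have hsymm : gaussianReal 0 1 (Ioi 0) = gaussianReal 0 1 (Iio 0) := by
    conv_lhs => rw [← gauss_map_neg]
    rw [Measure.map_apply measurable_neg measurableSet_Ioi]
    congr 1
    ext x; simp
  have h0 : gaussianReal 0 1 {(0:ℝ)} = 0 :=
    gaussianReal_absolutelyContinuous 0 one_ne_zero (volume_singleton)
  have htot : gaussianReal 0 1 (Iio 0) + gaussianReal 0 1 (Ioi 0) = 1 := by
    rw [← measure_union ((Set.Iio_disjoint_Ici le_rfl).mono_right Set.Ioi_subset_Ici_self) measurableSet_Ioi,
      Set.Iio_union_Ioi, measure_compl (measurableSet_singleton 0) (measure_ne_top _ _), h0]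
    simp
  rw [← hsymm, ← two_mul] at htot
  rw [ENNReal.eq_div_iff (by norm_num) (by norm_num), htot]

lemma gmeas_Iio : gaussianReal 0 1 (Iio 0) = 1 / 2 := by
  have hsymm : gaussianReal 0 1 (Ioi 0) = gaussianReal 0 1 (Iio 0) := by
    conv_lhs => rw [← gauss_map_neg]
    rw [Measure.map_apply measurable_neg measurableSet_Ioi]
    congr 1
    ext x; simp
  rw [← hsymm, gmeas_Ioi]

lemma ennhalf : (1/2 : ℝ≥0∞) * (1/2) + (1/2) * (1/2) = 1/2 := by
  have h2 : ((2:ℝ≥0∞))⁻¹ * 2⁻¹ = 4⁻¹ := by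
    rw [← ENNReal.mul_inv (Or.inl (by norm_num)) (Or.inl (by norm_num))]
    norm_num
  rw [one_div, h2, ← two_mul, ← div_eq_mul_inv, ← one_div,
    ENNReal.div_eq_div_iff (by norm_num) (by norm_num) (by norm_num) (by norm_num)]
  norm_num

section prodPart

noncomputable abbrev gnu : Measure (ℝ × ℝ) := (gaussianReal 0 1).prod (gaussianReal 0 1)

lemma Spos_eq : {p : ℝ × ℝ | 0 < p.1 * p.2}
    = (Ioi (0:ℝ) ×ˢ Ioi (0:ℝ)) ∪ (Iio (0:ℝ) ×ˢ Iio (0:ℝ)) := by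
  ext ⟨x, y⟩
  simp [mul_pos_iff]

lemma Sneg_eq : {p : ℝ × ℝ | p.1 * p.2 < 0}
    = (Ioi (0:ℝ) ×ˢ Iio (0:ℝ)) ∪ (Iio (0:ℝ) ×ˢ Ioi (0:ℝ)) := by
  ext ⟨x, y⟩
  simp [mul_neg_iff]

lemma disj_rect {s t s' t' : Set ℝ} (h : Disjoint s s') : Disjoint (s ×ˢ t) (s' ×ˢ t') := by
  rw [Set.disjoint_left]
  rintro ⟨x, y⟩ ⟨hx, _⟩ ⟨hx', _⟩
  exact Set.disjoint_left.mp h hx hx'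

lemma disj_Ioi_Iio : Disjoint (Ioi (0:ℝ)) (Iio (0:ℝ)) :=
  ((Set.Iio_disjoint_Ici le_rfl).mono_right Set.Ioi_subset_Ici_self).symm

lemma gnu_Spos : gnu {p : ℝ × ℝ | 0 < p.1 * p.2} = 1 / 2 := by
  rw [Spos_eq, measure_union (disj_rect disj_Ioi_Iio) (measurableSet_Iio.prod measurableSet_Iio),
    Measure.prod_prod, Measure.prod_prod, gmeas_Ioi, gmeas_Iio]
  exact ennhalf

lemma gnu_Sneg : gnu {p : ℝ × ℝ | p.1 * p.2 < 0} = 1 / 2 := by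
  rw [Sneg_eq, measure_union (disj_rect disj_Ioi_Iio) (measurableSet_Iio.prod measurableSet_Ioi),
    Measure.prod_prod, Measure.prod_prod, gmeas_Ioi, gmeas_Iio]
  exact ennhalf

end prodPart

lemma intOn_rect_mul {f g : ℝ → ℝ} (hf : Integrable f (gaussianReal 0 1))
    (hg : Integrable g (gaussianReal 0 1)) (s t : Set ℝ) :
    IntegrableOn (fun p : ℝ × ℝ => f p.1 * g p.2) (s ×ˢ t) gnu := by
  rw [IntegrableOn, ← Measure.prod_restrict]
  exact (hf.restrict).mul_prod (hg.restrict)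

lemma hc_sq : (Real.sqrt (2*π))⁻¹ * (Real.sqrt (2*π))⁻¹ = (2*π)⁻¹ := by
  rw [← mul_inv, Real.mul_self_sqrt (by positivity)]

lemma gnu_rect_mul (s t : Set ℝ) :
    ∫ p in s ×ˢ t, p.1 * p.2 ∂gnu
      = (∫ x in s, x ∂(gaussianReal 0 1)) * ∫ x in t, x ∂(gaussianReal 0 1) :=
  setIntegral_prod_mul (fun x : ℝ => x) (fun x : ℝ => x) s t

lemma gnu_rect_fst_sq (s t : Set ℝ) :
    ∫ p in s ×ˢ t, p.1 ^ 2 ∂gnu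
      = (∫ x in s, x ^ 2 ∂(gaussianReal 0 1)) * ((gaussianReal 0 1) t).toReal := by
  have h := setIntegral_prod_mul (μ := gaussianReal 0 1) (ν := gaussianReal 0 1)
    (fun x : ℝ => x ^ 2) (fun _ : ℝ => (1:ℝ)) s t
  simpa [measureReal_def] using h

lemma gnu_rect_snd_sq (s t : Set ℝ) :
    ∫ p in s ×ˢ t, p.2 ^ 2 ∂gnu
      = ((gaussianReal 0 1) s).toReal * ∫ x in t, x ^ 2 ∂(gaussianReal 0 1) := by
  have h := setIntegral_prod_mul (μ := gaussianReal 0 1) (ν := gaussianReal 0 1)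
    (fun _ : ℝ => (1:ℝ)) (fun x : ℝ => x ^ 2) s t
  simpa [measureReal_def] using h

lemma gnu_int_Spos_mul : ∫ p in {p : ℝ × ℝ | 0 < p.1 * p.2}, p.1 * p.2 ∂gnu = 1 / π := by
  rw [Spos_eq, setIntegral_union (disj_rect disj_Ioi_Iio)
    (measurableSet_Iio.prod measurableSet_Iio)
    (intOn_rect_mul gauss_integrable_id gauss_integrable_id _ _)
    (intOn_rect_mul gauss_integrable_id gauss_integrable_id _ _),
    gnu_rect_mul, gnu_rect_mul, gIoi_id, gIio_id]
  rw [show -(Real.sqrt (2*π))⁻¹ * -(Real.sqrt (2*π))⁻¹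
      = (Real.sqrt (2*π))⁻¹ * (Real.sqrt (2*π))⁻¹ by ring, hc_sq]
  rw [eq_div_iff Real.pi_ne_zero]
  field_simp
  norm_num

lemma gnu_int_Sneg_mul : ∫ p in {p : ℝ × ℝ | p.1 * p.2 < 0}, p.1 * p.2 ∂gnu = -(1 / π) := by
  rw [Sneg_eq, setIntegral_union (disj_rect disj_Ioi_Iio)
    (measurableSet_Iio.prod measurableSet_Ioi)
    (intOn_rect_mul gauss_integrable_id gauss_integrable_id _ _)
    (intOn_rect_mul gauss_integrable_id gauss_integrable_id _ _),
    gnu_rect_mul, gnu_rect_mul, gIoi_id, gIio_id]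
  rw [show (Real.sqrt (2*π))⁻¹ * -(Real.sqrt (2*π))⁻¹ + -(Real.sqrt (2*π))⁻¹ * (Real.sqrt (2*π))⁻¹
      = -(2 * ((Real.sqrt (2*π))⁻¹ * (Real.sqrt (2*π))⁻¹)) by ring, hc_sq]
  rw [neg_eq_iff_eq_neg, neg_neg, eq_div_iff Real.pi_ne_zero]
  field_simp


lemma intOn_rect_fst_sq (s t : Set ℝ) :
    IntegrableOn (fun p : ℝ × ℝ => p.1 ^ 2) (s ×ˢ t) gnu :=
  (intOn_rect_mul gauss_integrable_sq (integrable_const 1) s t).congr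
    (ae_of_all _ fun p => by simp)

lemma intOn_rect_snd_sq (s t : Set ℝ) :
    IntegrableOn (fun p : ℝ × ℝ => p.2 ^ 2) (s ×ˢ t) gnu :=
  (intOn_rect_mul (integrable_const 1) gauss_integrable_sq s t).congr
    (ae_of_all _ fun p => by simp)

lemma gnu_int_Spos_fst_sq : ∫ p in {p : ℝ × ℝ | 0 < p.1 * p.2}, p.1 ^ 2 ∂gnu = 1 / 2 := by
  rw [Spos_eq, setIntegral_union (disj_rect disj_Ioi_Iio)
    (measurableSet_Iio.prod measurableSet_Iio)
    (intOn_rect_fst_sq _ _) (intOn_rect_fst_sq _ _),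
    gnu_rect_fst_sq, gnu_rect_fst_sq, gIoi_sq, gIio_sq, gmeas_Ioi, gmeas_Iio]
  norm_num

lemma gnu_int_Sneg_fst_sq : ∫ p in {p : ℝ × ℝ | p.1 * p.2 < 0}, p.1 ^ 2 ∂gnu = 1 / 2 := by
  rw [Sneg_eq, setIntegral_union (disj_rect disj_Ioi_Iio)
    (measurableSet_Iio.prod measurableSet_Ioi)
    (intOn_rect_fst_sq _ _) (intOn_rect_fst_sq _ _),
    gnu_rect_fst_sq, gnu_rect_fst_sq, gIoi_sq, gIio_sq, gmeas_Ioi, gmeas_Iio]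
  norm_num

lemma gnu_int_Spos_snd_sq : ∫ p in {p : ℝ × ℝ | 0 < p.1 * p.2}, p.2 ^ 2 ∂gnu = 1 / 2 := by
  rw [Spos_eq, setIntegral_union (disj_rect disj_Ioi_Iio)
    (measurableSet_Iio.prod measurableSet_Iio)
    (intOn_rect_snd_sq _ _) (intOn_rect_snd_sq _ _),
    gnu_rect_snd_sq, gnu_rect_snd_sq, gIoi_sq, gIio_sq, gmeas_Ioi, gmeas_Iio]
  norm_num

lemma gnu_int_Sneg_snd_sq : ∫ p in {p : ℝ × ℝ | p.1 * p.2 < 0}, p.2 ^ 2 ∂gnu = 1 / 2 := by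
  rw [Sneg_eq, setIntegral_union (disj_rect disj_Ioi_Iio)
    (measurableSet_Iio.prod measurableSet_Ioi)
    (intOn_rect_snd_sq _ _) (intOn_rect_snd_sq _ _),
    gnu_rect_snd_sq, gnu_rect_snd_sq, gIoi_sq, gIio_sq, gmeas_Ioi, gmeas_Iio]
  norm_num

lemma sign_eq_one_iff' (r : ℝ) : Real.sign r = 1 ↔ 0 < r := by
  constructor
  · intro h
    rcases lt_trichotomy r 0 with hr | rfl | hr
    · rw [Real.sign_of_neg hr] at h; norm_num at h
    · rw [Real.sign_zero] at h; norm_num at h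
    · exact hr
  · exact Real.sign_of_pos

lemma sign_eq_neg_one_iff' (r : ℝ) : Real.sign r = -1 ↔ r < 0 := by
  constructor
  · intro h
    rcases lt_trichotomy r 0 with hr | rfl | hr
    · exact hr
    · rw [Real.sign_zero] at h; norm_num at h
    · rw [Real.sign_of_pos hr] at h; norm_num at h
  · exact Real.sign_of_neg

theorem main_prob {Ω : Type*} [MeasurableSpace Ω]
    (P : Measure Ω) [IsProbabilityMeasure P]
    (Z : Ω → Fin 2 → ℝ) (hZmeas : Measurable Z)
    (hZ : Measure.map Z P = Measure.pi fun _ : Fin 2 => gaussianReal 0 1) :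
    (∀ y : ℝ, (y = -1 ∨ y = 1) →
      P {ω | Real.sign (Z ω 0 * Z ω 1) = y} = 1 / 2 ∧
      (∫ ω, Z ω 0 * Z ω 1
          ∂(ProbabilityTheory.cond P {ω | Real.sign (Z ω 0 * Z ω 1) = y})) =
        2 * y / Real.pi ∧
      (∀ i : Fin 2,
        (∫ ω, (Z ω i) ^ 2
            ∂(ProbabilityTheory.cond P {ω | Real.sign (Z ω 0 * Z ω 1) = y})) = 1)) := by
  have hZ0 : Measurable fun ω => Z ω 0 := (measurable_pi_apply 0).comp hZmeas
  have hZ1 : Measurable fun ω => Z ω 1 := (measurable_pi_apply 1).comp hZmeas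
  set T : Ω → ℝ × ℝ := fun ω => (Z ω 0, Z ω 1) with hTdef
  have hT : Measurable T := hZ0.prodMk hZ1
  have hmapT : Measure.map T P = gnu := by
    have hco : T = (MeasurableEquiv.piFinTwo fun _ : Fin 2 => ℝ) ∘ Z := rfl
    rw [hco, ← Measure.map_map (MeasurableEquiv.measurable _) hZmeas, hZ,
      (measurePreserving_piFinTwo fun _ : Fin 2 => gaussianReal 0 1).map_eq]
  have hSpos : MeasurableSet {p : ℝ × ℝ | 0 < p.1 * p.2} :=
    measurableSet_lt measurable_const (measurable_fst.mul measurable_snd)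
  have hSneg : MeasurableSet {p : ℝ × ℝ | p.1 * p.2 < 0} :=
    measurableSet_lt (measurable_fst.mul measurable_snd) measurable_const
  have hPmeas : ∀ S : Set (ℝ × ℝ), MeasurableSet S → P (T ⁻¹' S) = gnu S := by
    intro S hS
    rw [← hmapT, Measure.map_apply hT hS]
  have hcondint : ∀ (S : Set (ℝ × ℝ)) (f : ℝ × ℝ → ℝ), MeasurableSet S → Continuous f →
      gnu S = 1 / 2 →
      ∫ ω, f (T ω) ∂(ProbabilityTheory.cond P (T ⁻¹' S)) = 2 * ∫ p in S, f p ∂gnu := by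
    intro S f hS hf hgS
    rw [ProbabilityTheory.cond, integral_smul_measure,
      ← setIntegral_map hS hf.aestronglyMeasurable hT.aemeasurable, hmapT,
      hPmeas S hS, hgS, one_div, inv_inv]
    norm_num
  have hposset : {ω | Real.sign (Z ω 0 * Z ω 1) = 1} = T ⁻¹' {p : ℝ × ℝ | 0 < p.1 * p.2} :=
    Set.ext fun ω => sign_eq_one_iff' _
  have hnegset : {ω | Real.sign (Z ω 0 * Z ω 1) = -1} = T ⁻¹' {p : ℝ × ℝ | p.1 * p.2 < 0} :=
    Set.ext fun ω => sign_eq_neg_one_iff' _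
  rintro y (rfl | rfl)
  · refine ⟨?_, ?_, ?_⟩
    · rw [hnegset, hPmeas _ hSneg, gnu_Sneg]
    · rw [hnegset]
      have h := hcondint _ (fun p : ℝ × ℝ => p.1 * p.2) hSneg (continuous_fst.mul continuous_snd) gnu_Sneg
      rw [gnu_int_Sneg_mul, show (2:ℝ) * -(1/π) = 2 * -1 / π by ring] at h
      exact h
    · intro i
      fin_cases i
      · rw [hnegset]
        have h := hcondint _ (fun p : ℝ × ℝ => p.1 ^ 2) hSneg (continuous_fst.pow 2) gnu_Sneg
        rw [gnu_int_Sneg_fst_sq] at h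
        norm_num at h
        exact h
      · rw [hnegset]
        have h := hcondint _ (fun p : ℝ × ℝ => p.2 ^ 2) hSneg (continuous_snd.pow 2) gnu_Sneg
        rw [gnu_int_Sneg_snd_sq] at h
        norm_num at h
        exact h
  · refine ⟨?_, ?_, ?_⟩
    · rw [hposset, hPmeas _ hSpos, gnu_Spos]
    · rw [hposset]
      have h := hcondint _ (fun p : ℝ × ℝ => p.1 * p.2) hSpos (continuous_fst.mul continuous_snd) gnu_Spos
      rw [gnu_int_Spos_mul, show (2:ℝ) * (1/π) = 2 * 1 / π by ring] at h
      exact h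
    · intro i
      fin_cases i
      · rw [hposset]
        have h := hcondint _ (fun p : ℝ × ℝ => p.1 ^ 2) hSpos (continuous_fst.pow 2) gnu_Spos
        rw [gnu_int_Spos_fst_sq] at h
        norm_num at h
        exact h
      · rw [hposset]
        have h := hcondint _ (fun p : ℝ × ℝ => p.2 ^ 2) hSpos (continuous_snd.pow 2) gnu_Spos
        rw [gnu_int_Spos_snd_sq] at h
        norm_num at h
        exact h

/-- 2-sparse parity `g(z₁,z₂) = sign(z₁z₂)`: each label value has probability
`1/2`, the conditional second moments are
`E[Z₁Z₂ | sign(Z₁Z₂) = y] = 2y/π` and `E[Z_i² | sign(Z₁Z₂) = y] = 1`, and the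
resulting linearized operator satisfies `‖𝓕(M)‖_F = (4/π²)‖M‖_F` on symmetric
matrices, so its operator norm is `4/π²`. -/
theorem two_sparse_parity_computation {Ω : Type*} [MeasurableSpace Ω]
    (P : Measure Ω) [IsProbabilityMeasure P]
    (Z : Ω → Fin 2 → ℝ) (hZmeas : Measurable Z)
    (hZ : Measure.map Z P = Measure.pi fun _ : Fin 2 => gaussianReal 0 1) :
    (∀ y : ℝ, (y = -1 ∨ y = 1) →
      P {ω | Real.sign (Z ω 0 * Z ω 1) = y} = 1 / 2 ∧
      (∫ ω, Z ω 0 * Z ω 1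
          ∂(ProbabilityTheory.cond P {ω | Real.sign (Z ω 0 * Z ω 1) = y})) =
        2 * y / Real.pi ∧
      (∀ i : Fin 2,
        (∫ ω, (Z ω i) ^ 2
            ∂(ProbabilityTheory.cond P {ω | Real.sign (Z ω 0 * Z ω 1) = y})) = 1)) ∧
    (∀ M : Matrix (Fin 2) (Fin 2) ℝ, M.IsSymm →
      frobNorm (parity2Op M) = (4 / Real.pi ^ 2) * frobNorm M) ∧
    sSup {x : ℝ | ∃ M : Matrix (Fin 2) (Fin 2) ℝ,
        M.IsSymm ∧ frobNorm M = 1 ∧ x = frobNorm (parity2Op M)} =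
      4 / Real.pi ^ 2 := by
  exact ⟨main_prob P Z hZmeas hZ, fun M _ => frob_parity2Op M, sSup_part⟩
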